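/- If f is a nonnegative random variable in H, then its quantization f̂, defined by (f̂g)(y) = ∫ min(f(x), f(y)) g(x) dν(x), is a bounded self-adjoint operator with ‖f̂‖ ≤ ‖f‖. -/

import Mathlib

open MeasureTheory ContinuousLinearMap
open Filter ComplexConjugate

noncomputable section

variable {Ω : Type*} [MeasurableSpace Ω]

/-- `T` is the quantization `f̂` of the nonnegative random variable `f`:
the integral operator with kernel `min (f x) (f y)`. -/
def IsQuantization (ν : Measure Ω) (f : Ω → ℝ) (T : Lp ℂ 2 ν →L[ℂ] Lp ℂ 2 ν) : Prop :=
  ∀ g : Lp ℂ 2 ν,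
    (T g : Ω → ℂ) =ᵐ[ν] fun y => ∫ x, ((min (f x) (f y) : ℝ) : ℂ) * (g : Ω → ℂ) x ∂ν

theorem quant_aux (ν : Measure Ω) [IsProbabilityMeasure ν] (f : Ω → ℝ)
    (hmf : Measurable f) (hf0 : ∀ x, 0 ≤ f x) (hfm : MemLp f 2 ν) :
    ∃ T : Lp ℂ 2 ν →L[ℂ] Lp ℂ 2 ν, IsQuantization ν f T ∧ IsSelfAdjoint T ∧
      ‖T‖ ≤ (eLpNorm f 2 ν).toReal := by
  classical
  set s : Ω → ℝ := fun x => Real.sqrt (f x) with hs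
  have hms : Measurable s := Real.continuous_sqrt.measurable.comp hmf
  have hfint : Integrable f ν := hfm.integrable one_le_two
  have hsm : MemLp s 2 ν := by
    rw [memLp_two_iff_integrable_sq hms.aestronglyMeasurable]
    exact hfint.congr (Eventually.of_forall fun x => by
      simp [hs, Real.sq_sqrt (hf0 x)])
  have hs0 : ∀ x, 0 ≤ s x := fun x => Real.sqrt_nonneg _
  have hmin0 : ∀ x y, 0 ≤ min (f x) (f y) := fun x y => le_min (hf0 x) (hf0 y)
  have hker : ∀ x y, min (f x) (f y) ≤ s x * s y := by
    intro x y
    have h1 : min (f x) (f y) =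
        Real.sqrt (min (f x) (f y)) * Real.sqrt (min (f x) (f y)) :=
      (Real.mul_self_sqrt (hmin0 x y)).symm
    rw [h1]
    exact mul_le_mul (Real.sqrt_le_sqrt (min_le_left _ _))
      (Real.sqrt_le_sqrt (min_le_right _ _)) (Real.sqrt_nonneg _) (Real.sqrt_nonneg _)
  set A : ℝ := (eLpNorm f 2 ν).toReal with hA
  set B : ℝ := (eLpNorm s 2 ν).toReal with hB
  -- CS helper
  have CS : ∀ u v : Ω → ℝ, MemLp u 2 ν → MemLp v 2 ν →
      ∫ x, u x * v x ∂ν ≤ (eLpNorm u 2 ν).toReal * (eLpNorm v 2 ν).toReal := by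
    intro u v hum hvm
    have h := real_inner_le_norm (hum.toLp u) (hvm.toLp v)
    rw [L2.inner_def, Lp.norm_toLp, Lp.norm_toLp] at h
    refine le_trans (le_of_eq ?_) h
    refine (integral_congr_ae ?_).symm
    filter_upwards [hum.coeFn_toLp, hvm.coeFn_toLp] with x h1 h2
    simp [h1, h2, mul_comm]
  have mul_int : ∀ u v : Ω → ℝ, MemLp u 2 ν → MemLp v 2 ν →
      Integrable (fun x => u x * v x) ν := by
    intro u v hum hvm
    have h := L2.integrable_inner (𝕜 := ℝ) (hum.toLp u) (hvm.toLp v)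
    refine h.congr ?_
    filter_upwards [hum.coeFn_toLp, hvm.coeFn_toLp] with x h1 h2
    simp [h1, h2, real_inner_eq_re_inner, mul_comm]
  -- B * B ≤ A
  have hBA : B * B ≤ A := by
    have h1 : ∫ x, s x * s x ∂ν = ∫ x, f x * (1:ℝ) ∂ν := by
      refine integral_congr_ae (Eventually.of_forall fun x => ?_)
      simp [hs, Real.mul_self_sqrt (hf0 x)]
    have h2 : B * B = ‖hsm.toLp s‖ ^ 2 := by
      rw [Lp.norm_toLp]; ring
    have h3 : (‖hsm.toLp s‖ : ℝ) ^ 2 = ∫ x, s x * s x ∂ν := by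
      rw [← real_inner_self_eq_norm_sq, L2.inner_def]
      refine integral_congr_ae ?_
      filter_upwards [hsm.coeFn_toLp] with x h1
      simp [h1, sq]
    have h4 : ∫ x, f x * (1:ℝ) ∂ν ≤ A * (eLpNorm (fun _ : Ω => (1:ℝ)) 2 ν).toReal :=
      CS f (fun _ => 1) hfm (memLp_const 1)
    have h5 : (eLpNorm (fun _ : Ω => (1:ℝ)) 2 ν).toReal = 1 := by
      rw [eLpNorm_const (1:ℝ) two_ne_zero (IsProbabilityMeasure.ne_zero ν)]
      simp
    rw [h2, h3, h1]
    calc ∫ x, f x * (1:ℝ) ∂ν ≤ A * (eLpNorm (fun _ : Ω => (1:ℝ)) 2 ν).toReal := h4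
      _ = A := by rw [h5, mul_one]
  -- the kernel operator as a function
  set K : Lp ℂ 2 ν → Ω → ℂ :=
    fun g y => ∫ x, ((min (f x) (f y) : ℝ) : ℂ) * (g : Ω → ℂ) x ∂ν with hK
  set C : Lp ℂ 2 ν → ℝ := fun g => ∫ x, s x * ‖(g : Ω → ℂ) x‖ ∂ν with hC
  have hgnorm : ∀ g : Lp ℂ 2 ν, MemLp (fun x => ‖(g : Ω → ℂ) x‖) 2 ν :=
    fun g => (Lp.memLp g).norm
  have hC0 : ∀ g, 0 ≤ C g := fun g =>
    integral_nonneg fun x => mul_nonneg (hs0 x) (norm_nonneg _)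
  have hCle : ∀ g, C g ≤ B * ‖g‖ := by
    intro g
    have := CS s (fun x => ‖(g : Ω → ℂ) x‖) hsm (hgnorm g)
    rwa [eLpNorm_norm, ← Lp.norm_def] at this
  have hsg : ∀ g : Lp ℂ 2 ν, Integrable (fun x => s x * ‖(g : Ω → ℂ) x‖) ν :=
    fun g => mul_int s _ hsm (hgnorm g)
  -- integrability in x for each y
  have hint : ∀ (g : Lp ℂ 2 ν) (y : Ω),
      Integrable (fun x => ((min (f x) (f y) : ℝ) : ℂ) * (g : Ω → ℂ) x) ν := by
    intro g y
    have hg1 : Integrable (g : Ω → ℂ) ν := (Lp.memLp g).integrable one_le_two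
    refine Integrable.mono' (hg1.norm.const_mul (f y)) ?_ ?_
    · exact ((Complex.measurable_ofReal.comp
        (hmf.min measurable_const)).stronglyMeasurable.aestronglyMeasurable).mul
        (Lp.aestronglyMeasurable g)
    · refine Eventually.of_forall fun x => ?_
      rw [norm_mul, Complex.norm_real, Real.norm_eq_abs, abs_of_nonneg (hmin0 x y)]
      exact mul_le_mul_of_nonneg_right (min_le_right _ _) (norm_nonneg _)
  -- pointwise bound
  have hbound : ∀ (g : Lp ℂ 2 ν) (y : Ω), ‖K g y‖ ≤ C g * s y := by
    intro g y
    calc ‖K g y‖ ≤ ∫ x, ‖((min (f x) (f y) : ℝ) : ℂ) * (g : Ω → ℂ) x‖ ∂ν :=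
          norm_integral_le_integral_norm _
      _ ≤ ∫ x, s y * (s x * ‖(g : Ω → ℂ) x‖) ∂ν := by
          refine integral_mono (hint g y).norm ((hsg g).const_mul (s y)) fun x => ?_
          rw [norm_mul, Complex.norm_real, Real.norm_eq_abs, abs_of_nonneg (hmin0 x y)]
          calc min (f x) (f y) * ‖(g : Ω → ℂ) x‖ ≤ (s x * s y) * ‖(g : Ω → ℂ) x‖ :=
                mul_le_mul_of_nonneg_right (hker x y) (norm_nonneg _)
            _ = s y * (s x * ‖(g : Ω → ℂ) x‖) := by ring
      _ = C g * s y := by rw [integral_const_mul]; ring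
  -- a.e. strong measurability of K g
  have hKm : ∀ g : Lp ℂ 2 ν, AEStronglyMeasurable (K g) ν := by
    intro g
    obtain ⟨g', hg'm, hgg'⟩ := Lp.aestronglyMeasurable g
    have hKeq : K g = fun y => ∫ x, ((min (f x) (f y) : ℝ) : ℂ) * g' x ∂ν := by
      funext y
      exact integral_congr_ae (hgg'.mono fun x hx => by dsimp only; rw [hx])
    rw [hKeq]
    have hsm2 : StronglyMeasurable
        (fun p : Ω × Ω => ((min (f p.2) (f p.1) : ℝ) : ℂ) * g' p.2) := by
      refine StronglyMeasurable.mul ?_ (hg'm.comp_measurable measurable_snd)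
      exact (Complex.measurable_ofReal.comp
        ((hmf.comp measurable_snd).min (hmf.comp measurable_fst))).stronglyMeasurable
    exact hsm2.integral_prod_right'.aestronglyMeasurable
  -- MemLp of K g
  have hKmem : ∀ g : Lp ℂ 2 ν, MemLp (K g) 2 ν := by
    intro g
    refine MemLp.of_le (hsm.const_mul (C g)) (hKm g)
      (Eventually.of_forall fun y => ?_)
    calc ‖K g y‖ ≤ C g * s y := hbound g y
      _ ≤ ‖C g * s y‖ := le_abs_self _
  -- norm bound for K g

  have hKnorm : ∀ g : Lp ℂ 2 ν, (eLpNorm (K g) 2 ν).toReal ≤ A * ‖g‖ := by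
    intro g
    have h1 : eLpNorm (K g) 2 ν ≤ eLpNorm (fun y => C g * s y) 2 ν := by
      refine eLpNorm_mono_ae (Eventually.of_forall fun y => ?_)
      exact le_trans (hbound g y) (le_abs_self _)
    have h2 : eLpNorm (fun y => C g * s y) 2 ν = ‖C g‖₊ * eLpNorm s 2 ν := by
      have h := eLpNorm_const_smul (C g) s 2 ν
      rw [enorm_eq_nnnorm] at h
      exact h
    have h3 : ((‖C g‖₊ : ENNReal) * eLpNorm s 2 ν).toReal = C g * B := by
      rw [ENNReal.toReal_mul]
      simp [hB, Real.norm_eq_abs, abs_of_nonneg (hC0 g)]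
    have h4 : eLpNorm (fun y => C g * s y) 2 ν ≠ ⊤ := by
      rw [h2]; exact ENNReal.mul_ne_top ENNReal.coe_ne_top hsm.2.ne
    have hB0 : 0 ≤ B := ENNReal.toReal_nonneg
    calc (eLpNorm (K g) 2 ν).toReal ≤ (eLpNorm (fun y => C g * s y) 2 ν).toReal :=
        ENNReal.toReal_mono h4 h1
      _ = C g * B := by rw [h2, h3]
      _ ≤ (B * ‖g‖) * B := mul_le_mul_of_nonneg_right (hCle g) hB0
      _ = (B * B) * ‖g‖ := by ring
      _ ≤ A * ‖g‖ := mul_le_mul_of_nonneg_right hBA (norm_nonneg g)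
  -- additivity and homogeneity of K
  have hadd : ∀ g h : Lp ℂ 2 ν, K (g + h) = K g + K h := by
    intro g h
    funext y
    have e1 : K (g + h) y = ∫ x, (((min (f x) (f y) : ℝ) : ℂ) * (g : Ω → ℂ) x
        + ((min (f x) (f y) : ℝ) : ℂ) * (h : Ω → ℂ) x) ∂ν := by
      refine integral_congr_ae ?_
      filter_upwards [Lp.coeFn_add g h] with x hx
      rw [hx, Pi.add_apply]; ring
    rw [Pi.add_apply, e1, integral_add (hint g y) (hint h y)]
  have hsmul : ∀ (c : ℂ) (g : Lp ℂ 2 ν), K (c • g) = c • K g := by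
    intro c g
    funext y
    have e1 : K (c • g) y = ∫ x, c * (((min (f x) (f y) : ℝ) : ℂ) * (g : Ω → ℂ) x) ∂ν := by
      refine integral_congr_ae ?_
      filter_upwards [Lp.coeFn_smul c g] with x hx
      rw [hx, Pi.smul_apply, smul_eq_mul]; ring
    rw [Pi.smul_apply, smul_eq_mul, e1, integral_const_mul]
  -- the operator
  let T₀ : Lp ℂ 2 ν →ₗ[ℂ] Lp ℂ 2 ν :=
    { toFun := fun g => (hKmem g).toLp (K g)
      map_add' := fun g h => by
        show (hKmem (g + h)).toLp (K (g + h))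
            = (hKmem g).toLp (K g) + (hKmem h).toLp (K h)
        have e : (hKmem (g + h)).toLp (K (g + h))
            = ((hKmem g).add (hKmem h)).toLp (K g + K h) := by
          apply MemLp.toLp_congr
          rw [hadd]
        rw [e, MemLp.toLp_add]
      map_smul' := fun c g => by
        show (hKmem (c • g)).toLp (K (c • g)) = c • (hKmem g).toLp (K g)
        have e : (hKmem (c • g)).toLp (K (c • g))
            = ((hKmem g).const_smul c).toLp (c • K g) := by
          apply MemLp.toLp_congr
          rw [hsmul]
        rw [e, MemLp.toLp_const_smul] }
  have hA0 : 0 ≤ A := ENNReal.toReal_nonneg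
  have hTnorm : ∀ g, ‖T₀ g‖ ≤ A * ‖g‖ := by
    intro g
    show ‖(hKmem g).toLp (K g)‖ ≤ A * ‖g‖
    rw [Lp.norm_toLp]
    exact hKnorm g
  let T : Lp ℂ 2 ν →L[ℂ] Lp ℂ 2 ν := T₀.mkContinuous A hTnorm
  have hTapp : ∀ g : Lp ℂ 2 ν, (T g : Ω → ℂ) =ᵐ[ν] K g := fun g => (hKmem g).coeFn_toLp
  refine ⟨T, fun g => hTapp g, ?_, LinearMap.mkContinuous_norm_le T₀ hA0 hTnorm⟩
  -- self-adjointness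
  rw [ContinuousLinearMap.isSelfAdjoint_iff_isSymmetric]
  intro g h
  rw [L2.inner_def, L2.inner_def]
  have hFm : AEStronglyMeasurable
      (fun z : Ω × Ω => ((min (f z.2) (f z.1) : ℝ) : ℂ)
        * (conj ((g : Ω → ℂ) z.2) * (h : Ω → ℂ) z.1)) (ν.prod ν) := by
    refine AEStronglyMeasurable.mul ?_ (AEStronglyMeasurable.mul ?_ ?_)
    · exact (Complex.measurable_ofReal.comp
        ((hmf.comp measurable_snd).min (hmf.comp measurable_fst))).aestronglyMeasurable
    · exact (Complex.continuous_conj.comp_aestronglyMeasurable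
        (Lp.aestronglyMeasurable g)).comp_quasiMeasurePreserving
        Measure.quasiMeasurePreserving_snd
    · exact (Lp.aestronglyMeasurable h).comp_quasiMeasurePreserving
        Measure.quasiMeasurePreserving_fst
  have hF : Integrable (Function.uncurry fun y x =>
      ((min (f x) (f y) : ℝ) : ℂ) * (conj ((g : Ω → ℂ) x) * (h : Ω → ℂ) y)) (ν.prod ν) := by
    refine Integrable.mono' ((hsg h).mul_prod (hsg g)) hFm
      (Eventually.of_forall fun z => ?_)
    rcases z with ⟨y, x⟩
    simp only [Function.uncurry, norm_mul, Complex.norm_real, Real.norm_eq_abs,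
      RCLike.norm_conj]
    rw [abs_of_nonneg (hmin0 x y)]
    calc min (f x) (f y) * (‖(g : Ω → ℂ) x‖ * ‖(h : Ω → ℂ) y‖)
        ≤ (s x * s y) * (‖(g : Ω → ℂ) x‖ * ‖(h : Ω → ℂ) y‖) :=
          mul_le_mul_of_nonneg_right (hker x y)
            (mul_nonneg (norm_nonneg _) (norm_nonneg _))
      _ = s y * ‖(h : Ω → ℂ) y‖ * (s x * ‖(g : Ω → ℂ) x‖) := by ring
  have e1 : ∀ y, conj (K g y) * (h : Ω → ℂ) y
      = ∫ x, ((min (f x) (f y) : ℝ) : ℂ) * (conj ((g : Ω → ℂ) x) * (h : Ω → ℂ) y) ∂ν := by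
    intro y
    have c1 : conj (K g y) = ∫ x, ((min (f x) (f y) : ℝ) : ℂ) * conj ((g : Ω → ℂ) x) ∂ν := by
      rw [show K g y = ∫ x, ((min (f x) (f y) : ℝ) : ℂ) * (g : Ω → ℂ) x ∂ν from rfl,
        ← integral_conj]
      refine integral_congr_ae (Eventually.of_forall fun x => ?_)
      simp [Complex.conj_ofReal]
    rw [c1, ← integral_mul_const]
    refine integral_congr_ae (Eventually.of_forall fun x => ?_)
    ring
  have e2 : ∀ x, conj ((g : Ω → ℂ) x) * K h x
      = ∫ y, ((min (f x) (f y) : ℝ) : ℂ) * (conj ((g : Ω → ℂ) x) * (h : Ω → ℂ) y) ∂ν := by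
    intro x
    rw [show K h x = ∫ y, ((min (f y) (f x) : ℝ) : ℂ) * (h : Ω → ℂ) y ∂ν from rfl,
      ← integral_const_mul]
    refine integral_congr_ae (Eventually.of_forall fun y => ?_)
    dsimp only
    rw [min_comm (f y) (f x)]
    ring
  have key : ∫ y, conj (K g y) * (h : Ω → ℂ) y ∂ν
      = ∫ x, conj ((g : Ω → ℂ) x) * K h x ∂ν := by
    calc ∫ y, conj (K g y) * (h : Ω → ℂ) y ∂ν
        = ∫ y, ∫ x, ((min (f x) (f y) : ℝ) : ℂ)
            * (conj ((g : Ω → ℂ) x) * (h : Ω → ℂ) y) ∂ν ∂ν :=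
          integral_congr_ae (Eventually.of_forall fun y => e1 y)
      _ = ∫ x, ∫ y, ((min (f x) (f y) : ℝ) : ℂ)
            * (conj ((g : Ω → ℂ) x) * (h : Ω → ℂ) y) ∂ν ∂ν :=
          integral_integral_swap hF
      _ = ∫ x, conj ((g : Ω → ℂ) x) * K h x ∂ν :=
          integral_congr_ae (Eventually.of_forall fun x => (e2 x).symm)
  trans (∫ y, conj (K g y) * (h : Ω → ℂ) y ∂ν)
  · exact integral_congr_ae (by
      filter_upwards [hTapp g] with y hy
      simp only [RCLike.inner_apply, ContinuousLinearMap.coe_coe]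
      rw [hy, mul_comm])
  rw [key]
  exact (integral_congr_ae (by
      filter_upwards [hTapp h] with x hx
      simp only [RCLike.inner_apply, ContinuousLinearMap.coe_coe]
      rw [hx, mul_comm])).symm

theorem stmt9 (ν : Measure Ω) [IsProbabilityMeasure ν] (f : Ω → ℝ) (hf0 : ∀ x, 0 ≤ f x)
    (hf : MemLp (fun x => (f x : ℂ)) 2 ν) :
    ∃ T : Lp ℂ 2 ν →L[ℂ] Lp ℂ 2 ν, IsQuantization ν f T ∧ IsSelfAdjoint T ∧
      ‖T‖ ≤ ‖hf.toLp (fun x => (f x : ℂ))‖ := by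
  have hfsm : AEStronglyMeasurable f ν := by
    have := Complex.continuous_re.comp_aestronglyMeasurable hf.aestronglyMeasurable
    simpa using this
  obtain ⟨f₀, hf₀m, hff₀⟩ := hfsm
  set f' : Ω → ℝ := fun x => max (f₀ x) 0 with hf'def
  have hmf' : Measurable f' := hf₀m.measurable.max measurable_const
  have hff' : f =ᵐ[ν] f' := hff₀.mono fun x hx => by
    simp only [hf'def]; rw [← hx, max_eq_left (hf0 x)]
  have hf'0 : ∀ x, 0 ≤ f' x := fun x => le_max_right _ _
  have hfsm' : AEStronglyMeasurable f ν := ⟨f', hmf'.stronglyMeasurable, hff'⟩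
  have hfm : MemLp f 2 ν := by
    refine ⟨hfsm', ?_⟩
    have : eLpNorm f 2 ν = eLpNorm (fun x => (f x : ℂ)) 2 ν := by
      rw [← eLpNorm_norm f, ← eLpNorm_norm (fun x => (f x : ℂ))]
      exact eLpNorm_congr_ae (Filter.Eventually.of_forall fun x => by simp)
    rw [this]; exact hf.2
  have hf'm : MemLp f' 2 ν := hfm.ae_eq hff'
  obtain ⟨T, hq, hsa, hn⟩ := quant_aux ν f' hmf' hf'0 hf'm
  refine ⟨T, ?_, hsa, ?_⟩
  · intro g
    refine (hq g).trans ?_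
    filter_upwards [hff'] with y hy
    refine integral_congr_ae ?_
    filter_upwards [hff'] with x hx
    rw [hx, hy]
  · refine hn.trans (le_of_eq ?_)
    rw [Lp.norm_toLp]
    congr 1
    calc eLpNorm f' 2 ν = eLpNorm f 2 ν := eLpNorm_congr_ae hff'.symm
      _ = eLpNorm (fun x => (f x : ℂ)) 2 ν := by
          rw [← eLpNorm_norm f, ← eLpNorm_norm (fun x => (f x : ℂ))]
          exact eLpNorm_congr_ae (Filter.Eventually.of_forall fun x => by simp)
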